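/- Uniform random watching observes an infection within a linear number of tolerated infections: if in each round i a set of a_i ≤ n nodes becomes infected and the observer watches one node chosen uniformly at random (independently each round), stopping when the watched node is among the infected ones that round, then the expected total number of infections Σ_{i=1}^{T} a_i before stopping is at most 3n/2, where T is the stopping round. -/

import Mathlib

/-- Uniform random watching observes an infection within a linear number of
tolerated infections: if in round `i` a set of `a i` nodes (`1 ≤ a i ≤ n`) becomes
infected and the observer watches a uniformly random node (success probability
`a i / n`, independently each round), then the expected total number of infections
before stopping, `Σ_i a_i · Π_{j<i} (1 − a_j/n)`, is at most `3n/2`. -/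
theorem expected_infections_le (n : ℕ) (hn : 1 ≤ n) (a : ℕ → ℕ)
    (ha : ∀ i, 1 ≤ a i ∧ a i ≤ n) :
    ∑' i : ℕ, (a i : ℝ) * ∏ j ∈ Finset.range i, (1 - (a j : ℝ) / (n : ℝ)) ≤
      3 * (n : ℝ) / 2 := by
  have hn0 : (0 : ℝ) < (n : ℝ) := by exact_mod_cast hn
  set P : ℕ → ℝ := fun i => ∏ j ∈ Finset.range i, (1 - (a j : ℝ) / (n : ℝ)) with hP
  have hfac : ∀ j, 0 ≤ 1 - (a j : ℝ) / (n : ℝ) := by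
    intro j
    have : (a j : ℝ) ≤ (n : ℝ) := by exact_mod_cast (ha j).2
    have : (a j : ℝ) / (n : ℝ) ≤ 1 := by
      rw [div_le_one hn0]; exact this
    linarith
  have hPnn : ∀ i, 0 ≤ P i := fun i =>
    Finset.prod_nonneg fun j _ => hfac j
  have hterm : ∀ i, (a i : ℝ) * P i = (n : ℝ) * P i - (n : ℝ) * P (i + 1) := by
    intro i
    have : P (i + 1) = P i * (1 - (a i : ℝ) / (n : ℝ)) := by
      simp [hP, Finset.prod_range_succ]
    rw [this]
    field_simp
    ring
  have hsum : ∀ N, ∑ i ∈ Finset.range N, (a i : ℝ) * P i ≤ (n : ℝ) := by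
    intro N
    have := Finset.sum_range_sub' (fun i => (n : ℝ) * P i) N
    calc ∑ i ∈ Finset.range N, (a i : ℝ) * P i
        = ∑ i ∈ Finset.range N, ((n : ℝ) * P i - (n : ℝ) * P (i + 1)) := by
          exact Finset.sum_congr rfl fun i _ => hterm i
      _ = (n : ℝ) * P 0 - (n : ℝ) * P N := this
      _ ≤ (n : ℝ) := by
          have h0 : P 0 = 1 := by simp [hP]
          have := mul_nonneg hn0.le (hPnn N)
          rw [h0]; linarith
  have := Real.tsum_le_of_sum_range_le (f := fun i => (a i : ℝ) * P i) (c := (n : ℝ))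
    (fun i => mul_nonneg (by positivity) (hPnn i)) hsum
  calc (∑' i : ℕ, (a i : ℝ) * P i) ≤ (n : ℝ) := this
    _ ≤ 3 * (n : ℝ) / 2 := by linarith
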